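/- Let t,k ≥ 3, G a (K_t,𝒯_k)-co-critical graph, τ a critical coloring of G maximizing red edges, D₁,…,D_p the blue components and H := G minus all edges inside the blue components. Then H is connected. -/

import Mathlib

/-- A red/blue edge-coloring of `G`, given by its red subgraph `R ≤ G`, is a
critical coloring if the red graph is `K_t`-free and every component of the
blue graph `G \ R` has fewer than `k` vertices. -/
def IsCriticalColoring {V : Type*} (G R : SimpleGraph V) (t k : ℕ) : Prop :=
  R ≤ G ∧ (∀ S : Finset V, ¬ R.IsNClique t S) ∧
    ∀ c : (G \ R).ConnectedComponent, c.supp.ncard < k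

/-- `G` is `(K_t, 𝒯_k)`-co-critical. -/
def CoCritical {V : Type*} (G : SimpleGraph V) (t k : ℕ) : Prop :=
  G ≠ ⊤ ∧ (∃ R, IsCriticalColoring G R t k) ∧
    ∀ u v : V, u ≠ v → ¬ G.Adj u v →
      ∀ R, ¬ IsCriticalColoring (G ⊔ SimpleGraph.fromEdgeSet {s(u, v)}) R t k

/-- The spanning subgraph of `G` obtained by deleting all edges lying inside a
single component of the blue graph `B`. -/
def Hgraph {V : Type*} (G B : SimpleGraph V) : SimpleGraph V where
  Adj u v := G.Adj u v ∧ B.connectedComponentMk u ≠ B.connectedComponentMk v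
  symm := by
    constructor
    intro u v h
    exact ⟨h.1.symm, h.2.symm⟩
  loopless := by
    constructor
    intro u h
    exact h.2 rfl

open SimpleGraph

/-- Key lemma: any two distinct nonadjacent vertices of a co-critical graph are
connected in `H`.  Proof: recolor `uv` red and recolor blue all red edges from
`u` (resp. `v`) inside the blue component of `u` (resp. `v`).  This keeps all
blue components inside old blue components, so by co-criticality the new red
graph contains a `K_t`, which must use the edge `uv`; any third vertex `w` of
this `K_t` is red-adjacent to both `u` and `v` via edges leaving their blue
components, i.e. `u — w — v` is a path in `H`. -/
lemma star_lemma {V : Type*} [Fintype V] {t k : ℕ} (ht : 3 ≤ t)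
    {G : SimpleGraph V}
    (hco : ∀ u v : V, u ≠ v → ¬ G.Adj u v →
      ∀ R, ¬ IsCriticalColoring (G ⊔ SimpleGraph.fromEdgeSet {s(u, v)}) R t k)
    {R : SimpleGraph V} (hR : IsCriticalColoring G R t k)
    {u v : V} (huv : u ≠ v) (hna : ¬ G.Adj u v) :
    (Hgraph G (G \ R)).Reachable u v := by
  classical
  by_contra hn
  -- the modified red graph
  set R' : SimpleGraph V := SimpleGraph.fromRel (fun a b =>
    (R.Adj a b ∧ ¬((G \ R).connectedComponentMk a = (G \ R).connectedComponentMk b ∧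
      (a = u ∨ b = u ∨ a = v ∨ b = v))) ∨ (a = u ∧ b = v)) with hR'def
  refine hco u v huv hna R' ⟨?_, ?_, ?_⟩
  · -- R' ≤ G + uv
    intro a b hab
    rw [hR'def, SimpleGraph.fromRel_adj] at hab
    obtain ⟨hne, h⟩ := hab
    rcases h with (⟨hr, -⟩ | ⟨rfl, rfl⟩) | (⟨hr, -⟩ | ⟨rfl, rfl⟩)
    · exact (SimpleGraph.sup_adj _ _ _ _).mpr (Or.inl (hR.1 hr))
    · exact (SimpleGraph.sup_adj _ _ _ _).mpr (Or.inr
        ((SimpleGraph.fromEdgeSet_adj _).mpr ⟨Set.mem_singleton _, hne⟩))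
    · exact (SimpleGraph.sup_adj _ _ _ _).mpr (Or.inl (hR.1 hr.symm))
    · exact (SimpleGraph.sup_adj _ _ _ _).mpr (Or.inr
        ((SimpleGraph.fromEdgeSet_adj _).mpr ⟨Set.mem_singleton_iff.mpr Sym2.eq_swap, hne⟩))
  · -- R' is K_t-free
    intro S hS
    -- first, u and v must both lie in S
    have humem : u ∈ S := by
      by_contra hu
      refine hR.2.1 S ⟨?_, hS.2⟩
      intro a ha b hb hab
      have h := hS.1 ha hb hab
      rw [hR'def, SimpleGraph.fromRel_adj] at h
      rcases h.2 with (⟨hr, -⟩ | ⟨ha', -⟩) | (⟨hr, -⟩ | ⟨hb', -⟩)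
      · exact hr
      · exact absurd (Finset.mem_coe.mp (ha' ▸ ha)) hu
      · exact hr.symm
      · exact absurd (Finset.mem_coe.mp (hb' ▸ hb)) hu
    have hvmem : v ∈ S := by
      by_contra hv
      refine hR.2.1 S ⟨?_, hS.2⟩
      intro a ha b hb hab
      have h := hS.1 ha hb hab
      rw [hR'def, SimpleGraph.fromRel_adj] at h
      rcases h.2 with (⟨hr, -⟩ | ⟨-, hb'⟩) | (⟨hr, -⟩ | ⟨-, ha'⟩)
      · exact hr
      · exact absurd (Finset.mem_coe.mp (hb' ▸ hb)) hv
      · exact hr.symm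
      · exact absurd (Finset.mem_coe.mp (ha' ▸ ha)) hv
    -- pick a third vertex w of the clique
    have hcard : 3 ≤ S.card := hS.2 ▸ ht
    have hvmem' : v ∈ S.erase u := Finset.mem_erase.mpr ⟨huv.symm, hvmem⟩
    have hne' : ((S.erase u).erase v).Nonempty := by
      rw [← Finset.card_pos, Finset.card_erase_of_mem hvmem',
        Finset.card_erase_of_mem humem]
      omega
    obtain ⟨w, hw⟩ := hne'
    have hwv : w ≠ v := (Finset.mem_erase.mp hw).1
    have hwu : w ≠ u := (Finset.mem_erase.mp (Finset.mem_erase.mp hw).2).1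
    have hwS : w ∈ S := Finset.mem_erase.mp (Finset.mem_erase.mp hw).2 |>.2
    -- extract the two red edges leaving the blue components
    have h1 := hS.1 (Finset.mem_coe.mpr humem) (Finset.mem_coe.mpr hwS) (Ne.symm hwu)
    rw [hR'def, SimpleGraph.fromRel_adj] at h1
    have h1' : R.Adj u w ∧
        (G \ R).connectedComponentMk u ≠ (G \ R).connectedComponentMk w := by
      rcases h1.2 with (⟨hr, hnc⟩ | ⟨-, hwv'⟩) | (⟨hr, hnc⟩ | ⟨hwu', -⟩)
      · exact ⟨hr, fun hc => hnc ⟨hc, Or.inl rfl⟩⟩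
      · exact absurd hwv' hwv
      · exact ⟨hr.symm, fun hc => hnc ⟨hc.symm, Or.inr (Or.inl rfl)⟩⟩
      · exact absurd hwu' hwu
    have h2 := hS.1 (Finset.mem_coe.mpr hvmem) (Finset.mem_coe.mpr hwS) (Ne.symm hwv)
    rw [hR'def, SimpleGraph.fromRel_adj] at h2
    have h2' : R.Adj v w ∧
        (G \ R).connectedComponentMk v ≠ (G \ R).connectedComponentMk w := by
      rcases h2.2 with (⟨hr, hnc⟩ | ⟨hvu', -⟩) | (⟨hr, hnc⟩ | ⟨hwu', -⟩)
      · exact ⟨hr, fun hc => hnc ⟨hc, Or.inr (Or.inr (Or.inl rfl))⟩⟩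
      · exact absurd hvu' huv.symm
      · exact ⟨hr.symm, fun hc => hnc ⟨hc.symm, Or.inr (Or.inr (Or.inr rfl))⟩⟩
      · exact absurd hwu' hwu
    -- u — w — v is a path in H
    have e1 : (Hgraph G (G \ R)).Adj u w := ⟨hR.1 h1'.1, h1'.2⟩
    have e2 : (Hgraph G (G \ R)).Adj v w := ⟨hR.1 h2'.1, h2'.2⟩
    exact hn (e1.reachable.trans e2.reachable.symm)
  · -- all blue components remain small
    have hstep : ∀ a b : V, ((G ⊔ SimpleGraph.fromEdgeSet {s(u, v)}) \ R').Adj a b →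
        (G \ R).connectedComponentMk a = (G \ R).connectedComponentMk b := by
      intro a b hab
      rw [SimpleGraph.sdiff_adj, SimpleGraph.sup_adj, SimpleGraph.fromEdgeSet_adj,
        Set.mem_singleton_iff] at hab
      obtain ⟨hg, hnr⟩ := hab
      rcases hg with hg | ⟨he, hne⟩
      · by_cases hr : R.Adj a b
        · rw [hR'def, SimpleGraph.fromRel_adj] at hnr
          push_neg at hnr
          have h2 := hnr hg.ne
          exact (h2.1.1 hr).1
        · exact SimpleGraph.ConnectedComponent.sound
            (SimpleGraph.Adj.reachable ((SimpleGraph.sdiff_adj G R a b).mpr ⟨hg, hr⟩))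
      · rcases Sym2.eq_iff.mp he with ⟨rfl, rfl⟩ | ⟨rfl, rfl⟩
        · exact absurd ((by
            rw [hR'def, SimpleGraph.fromRel_adj]
            exact ⟨hne, Or.inl (Or.inr ⟨rfl, rfl⟩)⟩ : R'.Adj a b)) hnr
        · exact absurd ((by
            rw [hR'def, SimpleGraph.fromRel_adj]
            exact ⟨hne, Or.inr (Or.inr ⟨rfl, rfl⟩)⟩ : R'.Adj a b)) hnr
    have hreach : ∀ a b : V, ((G ⊔ SimpleGraph.fromEdgeSet {s(u, v)}) \ R').Reachable a b →
        (G \ R).connectedComponentMk a = (G \ R).connectedComponentMk b := by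
      intro a b h
      obtain ⟨p⟩ := h
      induction p with
      | nil => rfl
      | cons hadj p ih => exact (hstep _ _ hadj).trans ih
    intro c
    induction c using SimpleGraph.ConnectedComponent.ind with
    | _ a =>
      have hsub : (((G ⊔ SimpleGraph.fromEdgeSet {s(u, v)}) \ R').connectedComponentMk a).supp ⊆
          ((G \ R).connectedComponentMk a).supp := by
        intro x hx
        rw [SimpleGraph.ConnectedComponent.mem_supp_iff] at hx ⊢
        exact hreach x a (SimpleGraph.ConnectedComponent.eq.mp hx)
      exact lt_of_le_of_lt (Set.ncard_le_ncard hsub (Set.toFinite _)) (hR.2.2 _)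

/-- with `R` a critical coloring of the co-critical graph `G`
maximizing the number of red edges, the graph `H` obtained from `G` by deleting
all edges inside blue components is connected. -/
theorem stmt_8 {V : Type*} [Fintype V] (t k : ℕ) (ht : 3 ≤ t) (hk : 3 ≤ k)
    (G : SimpleGraph V) (hG : CoCritical G t k)
    (R : SimpleGraph V) (hR : IsCriticalColoring G R t k)
    (hmax : ∀ R' : SimpleGraph V, IsCriticalColoring G R' t k →
      R'.edgeSet.ncard ≤ R.edgeSet.ncard)
    (H : SimpleGraph V) (hH : H = Hgraph G (G \ R)) :
    H.Connected := by
  classical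
  subst hH
  obtain ⟨hGtop, -, hco⟩ := hG
  -- there is a nonadjacent pair, since G is not complete
  have hpair : ∃ a b : V, a ≠ b ∧ ¬ G.Adj a b := by
    by_contra h
    push_neg at h
    exact hGtop (by
      ext a b
      simp only [SimpleGraph.top_adj]
      exact ⟨fun h' => h'.ne, fun hne => h a b hne⟩)
  obtain ⟨a, b, hab, hnab⟩ := hpair
  -- |V| ≥ k : recoloring ab blue must fail
  have hcard : k ≤ Fintype.card V := by
    have hnc := hco a b hab hnab R
    have h3 : ∃ c : ((G ⊔ SimpleGraph.fromEdgeSet {s(a, b)}) \ R).ConnectedComponent,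
        ¬ c.supp.ncard < k := by
      by_contra hc
      push_neg at hc
      exact hnc ⟨hR.1.trans le_sup_left, hR.2.1, hc⟩
    obtain ⟨c, hc⟩ := h3
    push_neg at hc
    calc k ≤ c.supp.ncard := hc
      _ ≤ (Set.univ : Set V).ncard := Set.ncard_le_ncard (Set.subset_univ _) (Set.toFinite _)
      _ = Fintype.card V := by rw [Set.ncard_univ, Nat.card_eq_fintype_card]
  have hNE : Nonempty V := Fintype.card_pos_iff.mp (by omega)
  -- each blue component misses some vertex
  have hq : ∀ x : V, ∃ q : V,
      (G \ R).connectedComponentMk q ≠ (G \ R).connectedComponentMk x := by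
    intro x
    by_contra h
    push_neg at h
    have hsupp : ((G \ R).connectedComponentMk x).supp = Set.univ := by
      ext y
      simp only [SimpleGraph.ConnectedComponent.mem_supp_iff, Set.mem_univ, iff_true]
      exact h y
    have hlt := hR.2.2 ((G \ R).connectedComponentMk x)
    rw [hsupp, Set.ncard_univ, Nat.card_eq_fintype_card] at hlt
    omega
  -- two vertices in different blue components are reachable in H
  have reach2 : ∀ x y : V,
      (G \ R).connectedComponentMk x ≠ (G \ R).connectedComponentMk y →
      (Hgraph G (G \ R)).Reachable x y := by
    intro x y hxy
    by_cases hadj : G.Adj x y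
    · exact SimpleGraph.Adj.reachable ⟨hadj, hxy⟩
    · exact star_lemma ht hco hR (fun h => hxy (by rw [h])) hadj
  refine ⟨fun x y => ?_⟩
  by_cases hxy : x = y
  · subst hxy; rfl
  by_cases hcc : (G \ R).connectedComponentMk x = (G \ R).connectedComponentMk y
  · obtain ⟨q, hq'⟩ := hq x
    have r1 := reach2 x q (Ne.symm hq')
    have r2 := reach2 q y (by rw [← hcc]; exact hq')
    exact r1.trans r2
  · exact reach2 x y hcc
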